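/- Suppose W_1, …, W_N are d×d invertible matrices with singular values bounded as δ ≤ σ_min(W_j) and σ_max(W_j) ≤ M for all j, with 0 < δ < M. Let Δ_{j,j+1} = W_j W_jᴴ − W_{j+1}ᴴ W_{j+1} for 1 ≤ j ≤ N−1, Δ_{0,1} = Δ_{N,N+1} = 0, and D_j = Δ_{j,j+1} W_j − W_j Δ_{j−1,j} for 1 ≤ j ≤ N. Then Σ_{j=1}^{N−1} ‖Δ_{j,j+1}‖_F² ≤ ((N−1)/2) · ((M/δ)^{2⌊N/2⌋} − 1)/(M² − δ²) · Σ_{j=1}^{N} ‖D_j‖_F². -/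

import Mathlib

open Matrix
open scoped ComplexOrder

/-- The smallest singular value of a square complex matrix. -/
noncomputable def sigmaMin {d : ℕ} (A : Matrix (Fin d) (Fin d) ℂ) : ℝ :=
  ⨅ k, Real.sqrt ((Matrix.isHermitian_mul_conjTranspose_self A).eigenvalues k)

/-- The largest singular value of a square complex matrix. -/
noncomputable def sigmaMax {d : ℕ} (A : Matrix (Fin d) (Fin d) ℂ) : ℝ :=
  ⨆ k, Real.sqrt ((Matrix.isHermitian_mul_conjTranspose_self A).eigenvalues k)

/-- The Frobenius norm of a complex matrix. -/
noncomputable def frobNorm {d : ℕ} (A : Matrix (Fin d) (Fin d) ℂ) : ℝ :=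
  Real.sqrt (∑ i, ∑ j, ‖A i j‖ ^ 2)

/-- The balance error `Δ_{j,j+1} = W_j W_jᴴ − W_{j+1}ᴴ W_{j+1}` for `1 ≤ j ≤ N−1`, and `0`
otherwise (so `Δ_{0,1} = Δ_{N,N+1} = 0`). -/
noncomputable def Δbal {d : ℕ} (W : ℕ → Matrix (Fin d) (Fin d) ℂ) (N j : ℕ) :
    Matrix (Fin d) (Fin d) ℂ :=
  if 1 ≤ j ∧ j ≤ N - 1 then W j * (W j)ᴴ - (W (j + 1))ᴴ * W (j + 1) else 0

namespace Stmt16Aux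
variable {d : ℕ}

noncomputable def q (x : Fin d → ℂ) : ℝ := ∑ i, ‖x i‖ ^ 2

lemma q_nonneg (x : Fin d → ℂ) : 0 ≤ q x :=
  Finset.sum_nonneg fun _ _ => sq_nonneg _

lemma conj_mul_self (z : ℂ) : star z * z = (‖z‖ ^ 2 : ℝ) := by
  rw [Complex.star_def, mul_comm, Complex.mul_conj, Complex.normSq_eq_norm_sq]

lemma ofReal_q (x : Fin d → ℂ) : (q x : ℂ) = star x ⬝ᵥ x := by
  simp only [q, dotProduct, Pi.star_apply, Complex.ofReal_sum]
  exact Finset.sum_congr rfl fun i _ => (conj_mul_self (x i)).symm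

lemma dot_cs (x y : Fin d → ℂ) :
    ‖star x ⬝ᵥ y‖ ≤ Real.sqrt (q x) * Real.sqrt (q y) := by
  have h := norm_inner_le_norm (𝕜 := ℂ) ((WithLp.equiv 2 _).symm x) ((WithLp.equiv 2 _).symm y)
  rw [WithLp.equiv_symm_apply, EuclideanSpace.inner_toLp_toLp, dotProduct_comm] at h
  simpa [EuclideanSpace.norm_eq, q] using h

lemma q_spectral (W : Matrix (Fin d) (Fin d) ℂ) (x : Fin d → ℂ) :
    ∃ y : Fin d → ℂ, q x = q y ∧
      q (Wᴴ *ᵥ x) = ∑ i, (isHermitian_mul_conjTranspose_self W).eigenvalues i * ‖y i‖ ^ 2 := by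
  set h := isHermitian_mul_conjTranspose_self W
  set U : Matrix (Fin d) (Fin d) ℂ := (h.eigenvectorUnitary : Matrix (Fin d) (Fin d) ℂ) with hU
  have hUU : U * star U = 1 := by
    simpa [hU] using congrArg Subtype.val (unitary.mul_star_self h.eigenvectorUnitary)
  have hsU : (star U)ᴴ = U := by rw [← star_eq_conjTranspose, star_star]
  set y : Fin d → ℂ := star U *ᵥ x with hy
  have hstary : star x ᵥ* U = star y := by rw [hy, star_mulVec, hsU]
  refine ⟨y, ?_, ?_⟩
  · have : (q x : ℂ) = (q y : ℂ) := by
      rw [ofReal_q, ofReal_q, hy, star_mulVec, hsU, ← dotProduct_mulVec, mulVec_mulVec, hUU,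
        one_mulVec]
    exact_mod_cast this
  · have hexp : (q (Wᴴ *ᵥ x) : ℂ)
        = ∑ i, ((h.eigenvalues i : ℂ)) * ((‖y i‖ : ℝ) : ℂ) ^ 2 := by
      rw [ofReal_q, star_mulVec, conjTranspose_conjTranspose, dotProduct_mulVec, vecMul_vecMul]
      conv_lhs => rw [h.spectral_theorem, Unitary.conjStarAlgAut_apply, ← hU]
      rw [← vecMul_vecMul, ← vecMul_vecMul, hstary, ← dotProduct_mulVec]
      simp only [dotProduct, vecMul_diagonal, Pi.star_apply, Function.comp_apply]
      refine Finset.sum_congr rfl fun i _ => ?_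
      have := conj_mul_self (y i)
      rw [mul_comm (star (y i)) _, mul_assoc, this]
      push_cast
      norm_num [mul_comm]
    have : (q (Wᴴ *ᵥ x) : ℂ) = ((∑ i, h.eigenvalues i * ‖y i‖ ^ 2 : ℝ) : ℂ) := by
      rw [hexp]; push_cast; ring
    exact_mod_cast this

section bounds
variable {W : Matrix (Fin d) (Fin d) ℂ} {δ M : ℝ}

lemma v_up (hev : ∀ k, (isHermitian_mul_conjTranspose_self W).eigenvalues k ≤ M ^ 2)
    (x : Fin d → ℂ) : q (Wᴴ *ᵥ x) ≤ M ^ 2 * q x := by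
  obtain ⟨y, hq, hs⟩ := q_spectral W x
  rw [hs, hq, q, Finset.mul_sum]
  exact Finset.sum_le_sum fun i _ => mul_le_mul_of_nonneg_right (hev i) (sq_nonneg _)

lemma v_lo (hev : ∀ k, δ ^ 2 ≤ (isHermitian_mul_conjTranspose_self W).eigenvalues k)
    (x : Fin d → ℂ) : δ ^ 2 * q x ≤ q (Wᴴ *ᵥ x) := by
  obtain ⟨y, hq, hs⟩ := q_spectral W x
  rw [hs, hq, q, Finset.mul_sum]
  exact Finset.sum_le_sum fun i _ => mul_le_mul_of_nonneg_right (hev i) (sq_nonneg _)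

lemma v_up' (hev : ∀ k, (isHermitian_mul_conjTranspose_self W).eigenvalues k ≤ M ^ 2)
    (hM : 0 ≤ M) (x : Fin d → ℂ) : q (W *ᵥ x) ≤ M ^ 2 * q x := by
  have key : ((q (W *ᵥ x) : ℝ) : ℂ) = star x ⬝ᵥ (Wᴴ *ᵥ (W *ᵥ x)) := by
    rw [ofReal_q, star_mulVec, ← dotProduct_mulVec]
  set t := Real.sqrt (q (W *ᵥ x)) with hts
  set s := Real.sqrt (q x) with hss
  have ht : 0 ≤ t := Real.sqrt_nonneg _
  have hs0 : 0 ≤ s := Real.sqrt_nonneg _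
  have ht2 : t ^ 2 = q (W *ᵥ x) := Real.sq_sqrt (q_nonneg _)
  have hs2 : s ^ 2 = q x := Real.sq_sqrt (q_nonneg _)
  have h1 : q (W *ᵥ x) ≤ s * Real.sqrt (q (Wᴴ *ᵥ (W *ᵥ x))) := by
    calc q (W *ᵥ x) = ‖((q (W *ᵥ x) : ℝ) : ℂ)‖ := by
          rw [Complex.norm_real, Real.norm_of_nonneg (q_nonneg _)]
      _ ≤ s * Real.sqrt (q (Wᴴ *ᵥ (W *ᵥ x))) := by rw [key]; exact dot_cs _ _
  have h2 : Real.sqrt (q (Wᴴ *ᵥ (W *ᵥ x))) ≤ M * t := by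
    calc Real.sqrt (q (Wᴴ *ᵥ (W *ᵥ x))) ≤ Real.sqrt (M ^ 2 * q (W *ᵥ x)) :=
          Real.sqrt_le_sqrt (v_up hev _)
      _ = M * t := by rw [Real.sqrt_mul (sq_nonneg M), Real.sqrt_sq hM]
  have h3 : t ^ 2 ≤ s * (M * t) := by
    rw [ht2]
    exact h1.trans (mul_le_mul_of_nonneg_left h2 hs0)
  rw [← ht2, ← hs2]
  nlinarith [sq_nonneg (t - M * s)]

lemma v_lo' (hu : IsUnit W)
    (hev : ∀ k, δ ^ 2 ≤ (isHermitian_mul_conjTranspose_self W).eigenvalues k)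
    (hδ : 0 < δ) (x : Fin d → ℂ) : δ ^ 2 * q x ≤ q (W *ᵥ x) := by
  have hdet : IsUnit (Wᴴ).det := by
    rw [det_conjTranspose]
    exact ((Matrix.isUnit_iff_isUnit_det W).mp hu).star
  set z := (Wᴴ)⁻¹ *ᵥ x with hz
  have hWz : Wᴴ *ᵥ z = x := by
    rw [hz, mulVec_mulVec, mul_nonsing_inv _ hdet, one_mulVec]
  have key : ((q x : ℝ) : ℂ) = star (W *ᵥ x) ⬝ᵥ z := by
    rw [ofReal_q, star_mulVec, ← dotProduct_mulVec, hWz]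
  set t := Real.sqrt (q (W *ᵥ x)) with hts
  set s := Real.sqrt (q x) with hss
  have ht : 0 ≤ t := Real.sqrt_nonneg _
  have hs0 : 0 ≤ s := Real.sqrt_nonneg _
  have ht2 : t ^ 2 = q (W *ᵥ x) := Real.sq_sqrt (q_nonneg _)
  have hs2 : s ^ 2 = q x := Real.sq_sqrt (q_nonneg _)
  have h1 : q x ≤ t * Real.sqrt (q z) := by
    calc q x = ‖((q x : ℝ) : ℂ)‖ := by rw [Complex.norm_real, Real.norm_of_nonneg (q_nonneg _)]
      _ ≤ t * Real.sqrt (q z) := by rw [key]; exact dot_cs _ _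
  have h2 : δ * Real.sqrt (q z) ≤ s := by
    have : δ ^ 2 * q z ≤ q x := by
      calc δ ^ 2 * q z ≤ q (Wᴴ *ᵥ z) := v_lo hev z
        _ = q x := by rw [hWz]
    calc δ * Real.sqrt (q z) = Real.sqrt (δ ^ 2 * q z) := by
          rw [Real.sqrt_mul (sq_nonneg δ), Real.sqrt_sq hδ.le]
      _ ≤ s := Real.sqrt_le_sqrt this
  have h3 : δ * (s * s) ≤ t * s := by
    have := mul_le_mul_of_nonneg_left h1 hδ.le
    calc δ * (s * s) = δ * q x := by rw [← hs2]; ring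
      _ ≤ δ * (t * Real.sqrt (q z)) := this
      _ = t * (δ * Real.sqrt (q z)) := by ring
      _ ≤ t * s := mul_le_mul_of_nonneg_left h2 ht
  rw [← ht2, ← hs2]
  nlinarith [sq_nonneg (t - δ * s)]

end bounds

noncomputable def frobSq (A : Matrix (Fin d) (Fin d) ℂ) : ℝ := ∑ i, ∑ j, ‖A i j‖ ^ 2

lemma frobSq_nonneg (A : Matrix (Fin d) (Fin d) ℂ) : 0 ≤ frobSq A :=
  Finset.sum_nonneg fun _ _ => Finset.sum_nonneg fun _ _ => sq_nonneg _

lemma frobSq_eq_cols (A : Matrix (Fin d) (Fin d) ℂ) :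
    frobSq A = ∑ j, q (fun i => A i j) := Finset.sum_comm

lemma frobSq_eq_rows (A : Matrix (Fin d) (Fin d) ℂ) :
    frobSq A = ∑ i, q (A i) := rfl

lemma col_mul (W A : Matrix (Fin d) (Fin d) ℂ) (j : Fin d) :
    (fun i => (W * A) i j) = W *ᵥ (fun i => A i j) := by
  funext i; simp [mul_apply, mulVec, dotProduct]

lemma q_row_mul (A W : Matrix (Fin d) (Fin d) ℂ) (i : Fin d) :
    q ((A * W) i) = q (Wᴴ *ᵥ star (A i)) := by
  have : ∀ j, (Wᴴ *ᵥ star (A i)) j = star ((A * W) i j) := by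
    intro j
    simp only [mulVec, dotProduct, conjTranspose_apply, Pi.star_apply, mul_apply, star_sum,
      star_mul']
    exact Finset.sum_congr rfl fun k _ => by ring
  unfold q
  refine Finset.sum_congr rfl fun j _ => ?_
  rw [this j, norm_star]

lemma q_star (x : Fin d → ℂ) : q (star x) = q x := by
  unfold q; exact Finset.sum_congr rfl fun i _ => by rw [Pi.star_apply, norm_star]

section mats
variable {W : Matrix (Fin d) (Fin d) ℂ} {δ M : ℝ}

lemma B1 (hev : ∀ k, (isHermitian_mul_conjTranspose_self W).eigenvalues k ≤ M ^ 2)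
    (hM : 0 ≤ M) (A : Matrix (Fin d) (Fin d) ℂ) : frobSq (W * A) ≤ M ^ 2 * frobSq A := by
  rw [frobSq_eq_cols, frobSq_eq_cols, Finset.mul_sum]
  exact Finset.sum_le_sum fun j _ => by rw [col_mul]; exact v_up' hev hM _

lemma B2 (hu : IsUnit W)
    (hev : ∀ k, δ ^ 2 ≤ (isHermitian_mul_conjTranspose_self W).eigenvalues k)
    (hδ : 0 < δ) (A : Matrix (Fin d) (Fin d) ℂ) : δ ^ 2 * frobSq A ≤ frobSq (W * A) := by
  rw [frobSq_eq_cols, frobSq_eq_cols, Finset.mul_sum]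
  exact Finset.sum_le_sum fun j _ => by rw [col_mul]; exact v_lo' hu hev hδ _

lemma B3 (hev : ∀ k, (isHermitian_mul_conjTranspose_self W).eigenvalues k ≤ M ^ 2)
    (A : Matrix (Fin d) (Fin d) ℂ) : frobSq (A * W) ≤ M ^ 2 * frobSq A := by
  rw [frobSq_eq_rows, frobSq_eq_rows, Finset.mul_sum]
  refine Finset.sum_le_sum fun i _ => ?_
  rw [q_row_mul, ← q_star (A i)]
  exact v_up hev _

lemma B4 (hev : ∀ k, δ ^ 2 ≤ (isHermitian_mul_conjTranspose_self W).eigenvalues k)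
    (A : Matrix (Fin d) (Fin d) ℂ) : δ ^ 2 * frobSq A ≤ frobSq (A * W) := by
  rw [frobSq_eq_rows, frobSq_eq_rows, Finset.mul_sum]
  refine Finset.sum_le_sum fun i _ => ?_
  rw [q_row_mul, ← q_star (A i)]
  exact v_lo hev _

end mats

section norms
attribute [local instance] Matrix.frobeniusSeminormedAddCommGroup

lemma frobNorm_eq_norm (A : Matrix (Fin d) (Fin d) ℂ) : frobNorm A = ‖A‖ := by
  rw [Matrix.frobenius_norm_def, frobNorm, Real.sqrt_eq_rpow]
  congr 1
  refine Finset.sum_congr rfl fun i _ => Finset.sum_congr rfl fun j _ => ?_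
  rw [← Real.rpow_natCast ‖A i j‖ 2]; norm_num

lemma frobNorm_sq (A : Matrix (Fin d) (Fin d) ℂ) : frobNorm A ^ 2 = frobSq A :=
  Real.sq_sqrt (frobSq_nonneg A)

lemma frobNorm_nonneg (A : Matrix (Fin d) (Fin d) ℂ) : 0 ≤ frobNorm A := Real.sqrt_nonneg _

lemma frobNorm_add_le (A B : Matrix (Fin d) (Fin d) ℂ) :
    frobNorm (A + B) ≤ frobNorm A + frobNorm B := by
  simp only [frobNorm_eq_norm]; exact norm_add_le _ _

lemma frobNorm_sub_le (A B : Matrix (Fin d) (Fin d) ℂ) :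
    frobNorm (A - B) ≤ frobNorm A + frobNorm B := by
  simp only [frobNorm_eq_norm]; exact norm_sub_le _ _

lemma frobNorm_zero : frobNorm (0 : Matrix (Fin d) (Fin d) ℂ) = 0 := by
  simp only [frobNorm_eq_norm]; exact norm_zero

end norms

section nbounds
variable {W : Matrix (Fin d) (Fin d) ℂ} {δ M : ℝ}

lemma ev_lo (hδ : 0 < δ) (hmin : δ ≤ sigmaMin W) (k : Fin d) :
    δ ^ 2 ≤ (isHermitian_mul_conjTranspose_self W).eigenvalues k := by
  have hne : Nonempty (Fin d) := ⟨k⟩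
  have h1 : sigmaMin W ≤ Real.sqrt ((isHermitian_mul_conjTranspose_self W).eigenvalues k) :=
    by unfold sigmaMin; exact ciInf_le (Finite.bddBelow_range _) k
  have hl0 : 0 ≤ (isHermitian_mul_conjTranspose_self W).eigenvalues k :=
    eigenvalues_self_mul_conjTranspose_nonneg W k
  calc δ ^ 2 ≤ Real.sqrt ((isHermitian_mul_conjTranspose_self W).eigenvalues k) ^ 2 :=
        pow_le_pow_left₀ hδ.le (hmin.trans h1) 2
    _ = _ := Real.sq_sqrt hl0

lemma ev_up (hmax : sigmaMax W ≤ M) (k : Fin d) :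
    (isHermitian_mul_conjTranspose_self W).eigenvalues k ≤ M ^ 2 := by
  have hne : Nonempty (Fin d) := ⟨k⟩
  have h1 : Real.sqrt ((isHermitian_mul_conjTranspose_self W).eigenvalues k) ≤ sigmaMax W :=
    by unfold sigmaMax; exact le_ciSup (f := fun k => Real.sqrt ((isHermitian_mul_conjTranspose_self W).eigenvalues k)) (Finite.bddAbove_range _) k
  have hl0 : 0 ≤ (isHermitian_mul_conjTranspose_self W).eigenvalues k :=
    eigenvalues_self_mul_conjTranspose_nonneg W k
  calc (isHermitian_mul_conjTranspose_self W).eigenvalues k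
      = Real.sqrt ((isHermitian_mul_conjTranspose_self W).eigenvalues k) ^ 2 :=
        (Real.sq_sqrt hl0).symm
    _ ≤ M ^ 2 := pow_le_pow_left₀ (Real.sqrt_nonneg _) (h1.trans hmax) 2

lemma nB1 (hδ : 0 < δ) (hδM : δ < M) (hmax : sigmaMax W ≤ M) (A : Matrix (Fin d) (Fin d) ℂ) :
    frobNorm (W * A) ≤ M * frobNorm A := by
  have hM : (0:ℝ) ≤ M := le_of_lt (hδ.trans hδM)
  have h := B1 (M := M) (ev_up hmax) hM A
  have := Real.sqrt_le_sqrt h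
  rw [Real.sqrt_mul (sq_nonneg M), Real.sqrt_sq hM] at this
  exact this

lemma nB3 (hδ : 0 < δ) (hδM : δ < M) (hmax : sigmaMax W ≤ M) (A : Matrix (Fin d) (Fin d) ℂ) :
    frobNorm (A * W) ≤ M * frobNorm A := by
  have hM : (0:ℝ) ≤ M := le_of_lt (hδ.trans hδM)
  have h := B3 (M := M) (ev_up hmax) A
  have := Real.sqrt_le_sqrt h
  rw [Real.sqrt_mul (sq_nonneg M), Real.sqrt_sq hM] at this
  exact this

lemma nB2 (hu : IsUnit W) (hδ : 0 < δ) (hmin : δ ≤ sigmaMin W) (A : Matrix (Fin d) (Fin d) ℂ) :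
    δ * frobNorm A ≤ frobNorm (W * A) := by
  have h := B2 hu (ev_lo hδ hmin) hδ A
  have := Real.sqrt_le_sqrt h
  rw [Real.sqrt_mul (sq_nonneg δ), Real.sqrt_sq hδ.le] at this
  exact this

lemma nB4 (hδ : 0 < δ) (hmin : δ ≤ sigmaMin W) (A : Matrix (Fin d) (Fin d) ℂ) :
    δ * frobNorm A ≤ frobNorm (A * W) := by
  have h := B4 (ev_lo hδ hmin) A
  have := Real.sqrt_le_sqrt h
  rw [Real.sqrt_mul (sq_nonneg δ), Real.sqrt_sq hδ.le] at this
  exact this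

end nbounds


section seq
variable {a b : ℕ → ℝ} {δ M : ℝ} {n : ℕ}

lemma seq_fwd (hδ : 0 < δ) (hM : 0 ≤ M) (h0 : a 0 = 0)
    (hrec : ∀ j, 1 ≤ j → j ≤ n → δ * a j ≤ b j + M * a (j - 1)) :
    ∀ j, j ≤ n → a j ≤ (1 / δ) * ∑ k ∈ Finset.Icc 1 j, (M / δ) ^ (j - k) * b k := by
  intro j
  induction j with
  | zero => intro _; simp [h0]
  | succ j ih =>
    intro hjn
    have hih := ih (le_of_lt (Nat.lt_of_lt_of_le (Nat.lt_succ_self j) hjn))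
    have hr : δ * a (j + 1) ≤ b (j + 1) + M * a j := by
      simpa using hrec (j + 1) (Nat.le_add_left 1 j) hjn
    have h1 : a (j + 1) ≤ (1 / δ) * (b (j + 1) + M * a j) := by
      rw [show (1 / δ) * (b (j + 1) + M * a j) = (b (j + 1) + M * a j) / δ from by ring,
        le_div_iff₀ hδ]
      linarith
    have h2 : M * a j ≤ (M / δ) * ∑ k ∈ Finset.Icc 1 j, (M / δ) ^ (j - k) * b k := by
      calc M * a j ≤ M * ((1 / δ) * ∑ k ∈ Finset.Icc 1 j, (M / δ) ^ (j - k) * b k) :=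
            mul_le_mul_of_nonneg_left hih hM
        _ = (M / δ) * ∑ k ∈ Finset.Icc 1 j, (M / δ) ^ (j - k) * b k := by ring
    have h3 : (M / δ) * ∑ k ∈ Finset.Icc 1 j, (M / δ) ^ (j - k) * b k
        = ∑ k ∈ Finset.Icc 1 j, (M / δ) ^ (j + 1 - k) * b k := by
      rw [Finset.mul_sum]
      refine Finset.sum_congr rfl fun k hk => ?_
      rw [Finset.mem_Icc] at hk
      have : j + 1 - k = (j - k) + 1 := by omega
      rw [this, pow_succ]; ring
    have h4 : ∑ k ∈ Finset.Icc 1 (j + 1), (M / δ) ^ (j + 1 - k) * b k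
        = (∑ k ∈ Finset.Icc 1 j, (M / δ) ^ (j + 1 - k) * b k) + b (j + 1) := by
      rw [Finset.sum_Icc_succ_top (Nat.le_add_left 1 j)]
      simp
    calc a (j + 1) ≤ (1 / δ) * (b (j + 1) + M * a j) := h1
      _ ≤ (1 / δ) * (b (j + 1) + ∑ k ∈ Finset.Icc 1 j, (M / δ) ^ (j + 1 - k) * b k) := by
          have := h2.trans_eq h3
          apply mul_le_mul_of_nonneg_left _ (by positivity)
          linarith
      _ = (1 / δ) * ∑ k ∈ Finset.Icc 1 (j + 1), (M / δ) ^ (j + 1 - k) * b k := by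
          rw [h4]; ring

lemma Icc_reflect_sum (f g : ℕ → ℝ) (hj : ∀ k, j + 1 ≤ k → k ≤ n → g (n + 1 - k) = f k)
    (hjn : j ≤ n) :
    ∑ k ∈ Finset.Icc 1 (n - j), g k = ∑ k ∈ Finset.Icc (j + 1) n, f k := by
  refine Finset.sum_nbij' (i := fun k => n + 1 - k) (j := fun k => n + 1 - k) ?_ ?_ ?_ ?_ ?_
  · intro k hk; simp only [Finset.mem_Icc] at *; omega
  · intro k hk; simp only [Finset.mem_Icc] at *; omega
  · intro k hk; simp only [Finset.mem_Icc] at hk; show n + 1 - (n + 1 - k) = k; omega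
  · intro k hk; simp only [Finset.mem_Icc] at hk; show n + 1 - (n + 1 - k) = k; omega
  · intro k hk
    simp only [Finset.mem_Icc] at hk
    have h1 := hj (n + 1 - k) (by omega) (by omega)
    have h2 : n + 1 - (n + 1 - k) = k := by omega
    rw [h2] at h1
    simpa using h1

lemma seq_bwd (hδ : 0 < δ) (hM : 0 ≤ M) (hn : a n = 0)
    (hrec : ∀ j, 1 ≤ j → j ≤ n - 1 → δ * a j ≤ b (j + 1) + M * a (j + 1)) :
    ∀ j, 1 ≤ j → j ≤ n →
      a j ≤ (1 / δ) * ∑ k ∈ Finset.Icc (j + 1) n, (M / δ) ^ (k - (j + 1)) * b k := by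
  intro j hj1 hjn
  have key : ∀ m, m ≤ n - 1 → (fun m => a (n - m)) m ≤
      (1 / δ) * ∑ k ∈ Finset.Icc 1 m, (M / δ) ^ (m - k) * (fun k => b (n + 1 - k)) k := by
    refine seq_fwd hδ hM (by simp [hn]) ?_
    intro m hm1 hmn
    have e1 : n + 1 - m = (n - m) + 1 := by omega
    have e2 : n - (m - 1) = (n - m) + 1 := by omega
    have := hrec (n - m) (by omega) (by omega)
    simp only [e1, e2]
    exact this
  have hkey := key (n - j) (by omega)
  have hnj : n - (n - j) = j := by omega
  simp only [hnj] at hkey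
  refine hkey.trans (le_of_eq ?_)
  congr 1
  exact Icc_reflect_sum _ _ (fun k hk1 hk2 => by
    have e5 : n - j - (n + 1 - k) = k - (j + 1) := by omega
    have e6 : n + 1 - (n + 1 - k) = k := by omega
    rw [e5, e6]) hjn



lemma cs_step (s : Finset ℕ) (c e : ℕ → ℝ) {x : ℝ} (hx0 : 0 ≤ x)
    (h : x ≤ ∑ k ∈ s, c k * e k) :
    x ^ 2 ≤ (∑ k ∈ s, c k ^ 2) * (∑ k ∈ s, e k ^ 2) :=
  (pow_le_pow_left₀ hx0 h 2).trans (Finset.sum_mul_sq_le_sq_mul_sq s c e)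

lemma geo_fwd {r : ℝ} (hr : 1 < r) (j : ℕ) :
    ∑ k ∈ Finset.Icc 1 j, (r ^ (j - k)) ^ 2 = (r ^ (2 * j) - 1) / (r ^ 2 - 1) := by
  have hr2 : r ^ 2 ≠ 1 := by nlinarith
  have h1 : ∑ k ∈ Finset.Icc 1 j, (r ^ (j - k)) ^ 2 = ∑ k ∈ Finset.Icc 1 j, (r ^ 2) ^ (j - k) := by
    refine Finset.sum_congr rfl fun k _ => ?_
    rw [← pow_mul, ← pow_mul, Nat.mul_comm]
  rw [h1, ← Finset.Ico_add_one_right_eq_Icc, Finset.sum_Ico_eq_sum_range]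
  have h2 : ∀ i, (r ^ 2) ^ (j - (1 + i)) = (fun i => (r ^ 2) ^ i) (j - 1 - i) := by
    intro i; congr 1; omega
  calc ∑ i ∈ Finset.range (j + 1 - 1), (r ^ 2) ^ (j - (1 + i))
      = ∑ i ∈ Finset.range j, (fun i => (r ^ 2) ^ i) (j - 1 - i) := by
        rw [show j + 1 - 1 = j from rfl]
        exact Finset.sum_congr rfl fun i _ => h2 i
    _ = ∑ i ∈ Finset.range j, (r ^ 2) ^ i := Finset.sum_range_reflect _ j
    _ = ((r ^ 2) ^ j - 1) / (r ^ 2 - 1) := geom_sum_eq hr2 j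
    _ = (r ^ (2 * j) - 1) / (r ^ 2 - 1) := by rw [← pow_mul]

lemma geo_bwd {r : ℝ} (hr : 1 < r) (j n : ℕ) :
    ∑ k ∈ Finset.Icc (j + 1) n, (r ^ (k - (j + 1))) ^ 2 = (r ^ (2 * (n - j)) - 1) / (r ^ 2 - 1) := by
  have hr2 : r ^ 2 ≠ 1 := by nlinarith
  have h1 : ∑ k ∈ Finset.Icc (j + 1) n, (r ^ (k - (j + 1))) ^ 2
      = ∑ k ∈ Finset.Icc (j + 1) n, (r ^ 2) ^ (k - (j + 1)) := by
    refine Finset.sum_congr rfl fun k _ => ?_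
    rw [← pow_mul, ← pow_mul, Nat.mul_comm]
  rw [h1, ← Finset.Ico_add_one_right_eq_Icc, Finset.sum_Ico_eq_sum_range]
  have h3 : ∀ i, j + 1 + i - (j + 1) = i := by intro i; omega
  calc ∑ i ∈ Finset.range (n + 1 - (j + 1)), (r ^ 2) ^ (j + 1 + i - (j + 1))
      = ∑ i ∈ Finset.range (n - j), (r ^ 2) ^ i := by
        rw [show n + 1 - (j + 1) = n - j from by omega]
        exact Finset.sum_congr rfl fun i _ => by rw [h3 i]
    _ = ((r ^ 2) ^ (n - j) - 1) / (r ^ 2 - 1) := geom_sum_eq hr2 _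
    _ = (r ^ (2 * (n - j)) - 1) / (r ^ 2 - 1) := by rw [← pow_mul]

lemma const_eq (hδ : 0 < δ) (hδM : δ < M) (m : ℕ) :
    (1 / δ) ^ 2 * (((M / δ) ^ (2 * m) - 1) / ((M / δ) ^ 2 - 1))
      = ((M / δ) ^ (2 * m) - 1) / (M ^ 2 - δ ^ 2) := by
  have hδ0 : δ ≠ 0 := ne_of_gt hδ
  have h1 : (M / δ) ^ 2 - 1 = (M ^ 2 - δ ^ 2) / δ ^ 2 := by field_simp
  have h2 : M ^ 2 - δ ^ 2 ≠ 0 := by nlinarith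
  rw [h1]
  field_simp

lemma cs_fwd {j : ℕ} (hδ : 0 < δ) (hδM : δ < M) (ha0 : 0 ≤ a j)
    (h : a j ≤ (1 / δ) * ∑ k ∈ Finset.Icc 1 j, (M / δ) ^ (j - k) * b k) :
    a j ^ 2 ≤ ((M / δ) ^ (2 * j) - 1) / (M ^ 2 - δ ^ 2) * ∑ k ∈ Finset.Icc 1 j, b k ^ 2 := by
  have hr : 1 < M / δ := (one_lt_div hδ).mpr hδM
  have h' : a j ≤ ∑ k ∈ Finset.Icc 1 j, ((1 / δ) * (M / δ) ^ (j - k)) * b k := by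
    calc a j ≤ _ := h
      _ = _ := by rw [Finset.mul_sum]; exact Finset.sum_congr rfl fun k _ => by ring
  have hcs := cs_step _ _ _ ha0 h'
  have hc : ∑ k ∈ Finset.Icc 1 j, ((1 / δ) * (M / δ) ^ (j - k)) ^ 2
      = ((M / δ) ^ (2 * j) - 1) / (M ^ 2 - δ ^ 2) := by
    have : ∀ k, ((1 / δ) * (M / δ) ^ (j - k)) ^ 2 = (1 / δ) ^ 2 * ((M / δ) ^ (j - k)) ^ 2 := by
      intro k; ring
    rw [Finset.sum_congr rfl fun k _ => this k, ← Finset.mul_sum, geo_fwd hr,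
      const_eq hδ hδM]
  rw [hc] at hcs
  exact hcs

lemma cs_bwd {j : ℕ} (hδ : 0 < δ) (hδM : δ < M) (ha0 : 0 ≤ a j)
    (h : a j ≤ (1 / δ) * ∑ k ∈ Finset.Icc (j + 1) n, (M / δ) ^ (k - (j + 1)) * b k) :
    a j ^ 2 ≤ ((M / δ) ^ (2 * (n - j)) - 1) / (M ^ 2 - δ ^ 2)
      * ∑ k ∈ Finset.Icc (j + 1) n, b k ^ 2 := by
  have hr : 1 < M / δ := (one_lt_div hδ).mpr hδM
  have h' : a j ≤ ∑ k ∈ Finset.Icc (j + 1) n, ((1 / δ) * (M / δ) ^ (k - (j + 1))) * b k := by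
    calc a j ≤ _ := h
      _ = _ := by rw [Finset.mul_sum]; exact Finset.sum_congr rfl fun k _ => by ring
  have hcs := cs_step _ _ _ ha0 h'
  have hc : ∑ k ∈ Finset.Icc (j + 1) n, ((1 / δ) * (M / δ) ^ (k - (j + 1))) ^ 2
      = ((M / δ) ^ (2 * (n - j)) - 1) / (M ^ 2 - δ ^ 2) := by
    have : ∀ k, ((1 / δ) * (M / δ) ^ (k - (j + 1))) ^ 2
        = (1 / δ) ^ 2 * ((M / δ) ^ (k - (j + 1))) ^ 2 := by intro k; ring
    rw [Finset.sum_congr rfl fun k _ => this k, ← Finset.mul_sum, geo_bwd hr,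
      const_eq hδ hδM]
  rw [hc] at hcs
  exact hcs

end seq
end Stmt16Aux

open Stmt16Aux

/-- With `δ ≤ σ_min(W_j)`, `σ_max(W_j) ≤ M`, `0 < δ < M`, all `W_j` invertible, and
`D_j = Δ_{j,j+1} W_j − W_j Δ_{j−1,j}`:
`Σ_{j=1}^{N−1} ‖Δ_{j,j+1}‖_F² ≤ ((N−1)/2)((M/δ)^{2⌊N/2⌋} − 1)/(M² − δ²) Σ_{j=1}^N ‖D_j‖_F²`. -/
theorem stmt16 {d N : ℕ} (hN : 2 ≤ N) (W : ℕ → Matrix (Fin d) (Fin d) ℂ)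
    (δ M : ℝ) (hδ : 0 < δ) (hδM : δ < M)
    (hinv : ∀ j, 1 ≤ j → j ≤ N → IsUnit (W j))
    (hmin : ∀ j, 1 ≤ j → j ≤ N → δ ≤ sigmaMin (W j))
    (hmax : ∀ j, 1 ≤ j → j ≤ N → sigmaMax (W j) ≤ M) :
    (∑ j ∈ Finset.Ico 1 N, frobNorm (Δbal W N j) ^ 2) ≤
      ((N : ℝ) - 1) / 2 * (((M / δ) ^ (2 * (N / 2)) - 1) / (M ^ 2 - δ ^ 2)) *
        ∑ j ∈ Finset.Icc 1 N,
          frobNorm (Δbal W N j * W j - W j * Δbal W N (j - 1)) ^ 2 := by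

  classical
  have hM0 : 0 ≤ M := (hδ.trans hδM).le
  set a : ℕ → ℝ := fun j => frobNorm (Δbal W N j) with ha
  set b : ℕ → ℝ := fun j => frobNorm (Δbal W N j * W j - W j * Δbal W N (j - 1)) with hb
  have ha0 : ∀ j, 0 ≤ a j := fun j => frobNorm_nonneg _
  have hb0 : ∀ j, 0 ≤ b j := fun j => frobNorm_nonneg _
  have haz : a 0 = 0 := by
    have : Δbal W N 0 = 0 := by rw [Δbal]; simp
    rw [ha]; simp only [this]; exact frobNorm_zero
  have haN : a N = 0 := by
    have : Δbal W N N = 0 := by rw [Δbal, if_neg]; omega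
    rw [ha]; simp only [this]; exact frobNorm_zero
  -- forward recurrence
  have hfwd_rec : ∀ j, 1 ≤ j → j ≤ N - 1 → δ * a j ≤ b j + M * a (j - 1) := by
    intro j hj1 hj2
    have h1 : δ * a j ≤ frobNorm (Δbal W N j * W j) :=
      nB4 hδ (hmin j hj1 (by omega)) _
    have h2 : Δbal W N j * W j
        = (Δbal W N j * W j - W j * Δbal W N (j - 1)) + W j * Δbal W N (j - 1) := by
      abel
    calc δ * a j ≤ frobNorm (Δbal W N j * W j) := h1
      _ = frobNorm ((Δbal W N j * W j - W j * Δbal W N (j - 1)) + W j * Δbal W N (j - 1)) := by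
          rw [← h2]
      _ ≤ b j + frobNorm (W j * Δbal W N (j - 1)) := frobNorm_add_le _ _
      _ ≤ b j + M * a (j - 1) := by
          have := nB1 hδ hδM (hmax j hj1 (by omega)) (Δbal W N (j - 1))
          linarith
  -- backward recurrence
  have hbwd_rec : ∀ j, 1 ≤ j → j ≤ N - 1 → δ * a j ≤ b (j + 1) + M * a (j + 1) := by
    intro j hj1 hj2
    have h1 : δ * a j ≤ frobNorm (W (j + 1) * Δbal W N j) :=
      nB2 (hinv (j + 1) (by omega) (by omega)) hδ (hmin (j + 1) (by omega) (by omega)) _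
    have h2 : W (j + 1) * Δbal W N j
        = Δbal W N (j + 1) * W (j + 1)
          - (Δbal W N (j + 1) * W (j + 1) - W (j + 1) * Δbal W N ((j + 1) - 1)) := by
      abel
    calc δ * a j ≤ frobNorm (W (j + 1) * Δbal W N j) := h1
      _ = frobNorm (Δbal W N (j + 1) * W (j + 1)
          - (Δbal W N (j + 1) * W (j + 1) - W (j + 1) * Δbal W N ((j + 1) - 1))) := by rw [← h2]
      _ ≤ frobNorm (Δbal W N (j + 1) * W (j + 1)) + b (j + 1) := frobNorm_sub_le _ _
      _ ≤ b (j + 1) + M * a (j + 1) := by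
          have := nB3 hδ hδM (hmax (j + 1) (by omega) (by omega)) (Δbal W N (j + 1))
          linarith
  -- closed-form bounds, squared via Cauchy-Schwarz
  have hfcs : ∀ j, j ≤ N - 1 →
      a j ^ 2 ≤ ((M / δ) ^ (2 * j) - 1) / (M ^ 2 - δ ^ 2) * ∑ k ∈ Finset.Icc 1 j, b k ^ 2 := by
    intro j hj
    exact cs_fwd hδ hδM (ha0 j) (seq_fwd (n := N - 1) hδ hM0 haz hfwd_rec j hj)
  have hbcs : ∀ j, 1 ≤ j → j ≤ N →
      a j ^ 2 ≤ ((M / δ) ^ (2 * (N - j)) - 1) / (M ^ 2 - δ ^ 2)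
        * ∑ k ∈ Finset.Icc (j + 1) N, b k ^ 2 := by
    intro j hj1 hj2
    exact cs_bwd hδ hδM (ha0 j) (seq_bwd (n := N) hδ hM0 haN hbwd_rec j hj1 hj2)
  set T : ℝ := ∑ k ∈ Finset.Icc 1 N, b k ^ 2 with hT
  set K : ℝ := ((M / δ) ^ (2 * (N / 2)) - 1) / (M ^ 2 - δ ^ 2) with hK
  have hT0 : 0 ≤ T := Finset.sum_nonneg fun _ _ => sq_nonneg _
  have hMδ : (0:ℝ) < M ^ 2 - δ ^ 2 := by nlinarith
  have hr1 : (1:ℝ) ≤ M / δ := le_of_lt ((one_lt_div hδ).mpr hδM)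
  -- pairing bound
  have hpair : ∀ j, 1 ≤ j → 2 * j ≤ N → a j ^ 2 + a (N - j) ^ 2 ≤ K * T := by
    intro j hj1 hj2
    have h1 := hfcs j (by omega)
    have h2 := hbcs (N - j) (by omega) (by omega)
    have e : N - (N - j) = j := by omega
    rw [e] at h2
    set Kj : ℝ := ((M / δ) ^ (2 * j) - 1) / (M ^ 2 - δ ^ 2) with hKj
    have hKj0 : 0 ≤ Kj := by
      apply div_nonneg _ hMδ.le
      have : (1:ℝ) ≤ (M / δ) ^ (2 * j) := one_le_pow₀ hr1
      linarith
    have hKjK : Kj ≤ K := by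
      have hjd : j ≤ N / 2 := (Nat.le_div_iff_mul_le (by norm_num)).mpr (by omega)
      have hle : (M / δ) ^ (2 * j) ≤ (M / δ) ^ (2 * (N / 2)) :=
        pow_le_pow_right₀ hr1 (by omega)
      rw [hKj, hK]
      gcongr
    have hsum : (∑ k ∈ Finset.Icc 1 j, b k ^ 2)
        + (∑ k ∈ Finset.Icc (N - j + 1) N, b k ^ 2) ≤ T := by
      have hdisj : Disjoint (Finset.Icc 1 j) (Finset.Icc (N - j + 1) N) := by
        rw [Finset.disjoint_left]
        intro x hx1 hx2
        simp only [Finset.mem_Icc] at hx1 hx2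
        omega
      rw [← Finset.sum_union hdisj]
      apply Finset.sum_le_sum_of_subset_of_nonneg
      · intro x hx
        simp only [Finset.mem_union, Finset.mem_Icc] at hx ⊢
        omega
      · intro _ _ _; exact sq_nonneg _
    have hS1 : 0 ≤ ∑ k ∈ Finset.Icc 1 j, b k ^ 2 := Finset.sum_nonneg fun _ _ => sq_nonneg _
    have hS2 : 0 ≤ ∑ k ∈ Finset.Icc (N - j + 1) N, b k ^ 2 :=
      Finset.sum_nonneg fun _ _ => sq_nonneg _
    calc a j ^ 2 + a (N - j) ^ 2
        ≤ Kj * (∑ k ∈ Finset.Icc 1 j, b k ^ 2) + Kj * (∑ k ∈ Finset.Icc (N - j + 1) N, b k ^ 2) :=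
          add_le_add h1 h2
      _ = Kj * ((∑ k ∈ Finset.Icc 1 j, b k ^ 2) + ∑ k ∈ Finset.Icc (N - j + 1) N, b k ^ 2) := by
          ring
      _ ≤ Kj * T := mul_le_mul_of_nonneg_left hsum hKj0
      _ ≤ K * T := mul_le_mul_of_nonneg_right hKjK hT0
  -- reflection
  have hreflect : (∑ j ∈ Finset.Ico 1 N, a (N - j) ^ 2) = ∑ j ∈ Finset.Ico 1 N, a j ^ 2 := by
    refine Finset.sum_nbij' (i := fun j => N - j) (j := fun j => N - j) ?_ ?_ ?_ ?_ ?_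
    · intro k hk; simp only [Finset.mem_Ico] at hk ⊢; omega
    · intro k hk; simp only [Finset.mem_Ico] at hk ⊢; omega
    · intro k hk; simp only [Finset.mem_Ico] at hk; show N - (N - k) = k; omega
    · intro k hk; simp only [Finset.mem_Ico] at hk; show N - (N - k) = k; omega
    · intro k hk; rfl
  have hmain : (∑ j ∈ Finset.Ico 1 N, (a j ^ 2 + a (N - j) ^ 2)) ≤ ((N:ℝ) - 1) * (K * T) := by
    calc (∑ j ∈ Finset.Ico 1 N, (a j ^ 2 + a (N - j) ^ 2))
        ≤ ∑ _j ∈ Finset.Ico 1 N, K * T := by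
          refine Finset.sum_le_sum fun j hj => ?_
          simp only [Finset.mem_Ico] at hj
          rcases le_or_gt (2 * j) N with h | h
          · exact hpair j hj.1 h
          · have hp := hpair (N - j) (by omega) (by omega)
            have e : N - (N - j) = j := by omega
            rw [e] at hp
            linarith
      _ = ((N:ℝ) - 1) * (K * T) := by
          rw [Finset.sum_const, Nat.card_Ico, nsmul_eq_mul]
          congr 1
          have : (1:ℕ) ≤ N := by omega
          push_cast [Nat.cast_sub this]
          ring
  have hsplit : (∑ j ∈ Finset.Ico 1 N, (a j ^ 2 + a (N - j) ^ 2))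
      = 2 * ∑ j ∈ Finset.Ico 1 N, a j ^ 2 := by
    rw [Finset.sum_add_distrib, hreflect]; ring
  show (∑ j ∈ Finset.Ico 1 N, a j ^ 2) ≤ ((N : ℝ) - 1) / 2 * K * T
  rw [hsplit] at hmain
  nlinarith [hmain]
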